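/- Let G = (V, A, g) be a finite directed graph with gain function g and battery capacity B > 0, and let x, y ∈ V. Suppose there is a walk P from x to y whose induced path is ascending (with respect to the zero schedule) with g(P) > 0, and a walk Q from y to x whose induced path is monotone with respect to some charge drop schedule C with g(P) + g^C(Q) > 0. Then there exists a walk W from x to y with α_0(W) = B: starting at x with an empty battery, the car can reach y with a full battery. -/
import Mathlib


open Finset

namespace EV

noncomputable section

/-- Charge after traversing `i` arcs of a path with arc gains `g`, battery capacity `B`,
initial charge `b`. -/
def charge (B b : ℝ) (g : ℕ → ℝ) : ℕ → ℝ
  | 0 => b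
  | i + 1 => min (charge B b g i + g i) B

/-- The traversal of the path with `n` arcs is feasible from initial charge `b`. -/
def Feasible (B b : ℝ) (g : ℕ → ℝ) (n : ℕ) : Prop :=
  ∀ i < n, 0 ≤ charge B b g i + g i

open Classical in
/-- Maximum final charge `α_b(P)` for a path `P` with `n` arc gains `g`,
as an extended real (`⊥ = -∞` if the traversal is infeasible). -/
def alpha (B b : ℝ) (g : ℕ → ℝ) (n : ℕ) : EReal :=
  if Feasible B b g n then ((charge B b g n : ℝ) : EReal) else ⊥

/-- Gain of the `i`-th vertex (0-indexed): the sum of the first `i` arc gains. -/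
def vGain (g : ℕ → ℝ) (i : ℕ) : ℝ := ∑ t ∈ Finset.range i, g t

/-- `P` is traversable: `α_B(P) ≥ 0`, i.e. feasible from a full battery. -/
def Traversable (B : ℝ) (g : ℕ → ℝ) (n : ℕ) : Prop := Feasible B B g n

/-- `C` is a charge drop schedule for a path with `n` arcs (vertices `0,…,n`):
no drop at the first vertex, all drops nonnegative. -/
def Schedule (C : ℕ → ℝ) (n : ℕ) : Prop := C 0 = 0 ∧ ∀ i ≤ n, 0 ≤ C i

/-- Gain of vertex `i` with respect to the charge drop schedule `C`. -/
def cGain (g C : ℕ → ℝ) (i : ℕ) : ℝ := vGain g i - ∑ t ∈ Finset.range (i + 1), C t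

/-- `P` (with `n` arcs) is ascending with respect to the schedule `C`. -/
def AscendingC (B : ℝ) (g C : ℕ → ℝ) (n : ℕ) : Prop :=
  Traversable B g n ∧ ∀ i ≤ n, 0 ≤ cGain g C i ∧ cGain g C i ≤ cGain g C n

/-- `P` (with `n` arcs) is descending with respect to the schedule `C`. -/
def DescendingC (B : ℝ) (g C : ℕ → ℝ) (n : ℕ) : Prop :=
  Traversable B g n ∧ ∀ i ≤ n, cGain g C n ≤ cGain g C i ∧ cGain g C i ≤ 0

/-- `P` is monotone with respect to the schedule `C`. -/
def MonotoneC (B : ℝ) (g C : ℕ → ℝ) (n : ℕ) : Prop :=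
  AscendingC B g C n ∨ DescendingC B g C n

/-- Ascending with respect to the zero schedule. -/
def Ascending (B : ℝ) (g : ℕ → ℝ) (n : ℕ) : Prop := AscendingC B g (fun _ => 0) n

/-- Descending with respect to the zero schedule. -/
def Descending (B : ℝ) (g : ℕ → ℝ) (n : ℕ) : Prop := DescendingC B g (fun _ => 0) n

/-- Monotone with respect to the zero schedule. -/
def MonotonePath (B : ℝ) (g : ℕ → ℝ) (n : ℕ) : Prop := Ascending B g n ∨ Descending B g n

/-- The contiguous subpath whose arcs start at arc index `a`. -/
def SubPath (g : ℕ → ℝ) (a : ℕ) : ℕ → ℝ := fun t => g (a + t)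

/-- Restriction of a charge drop schedule to the subpath starting at vertex `a`:
no drop at the subpath's first vertex. -/
def restrict (C : ℕ → ℝ) (a : ℕ) : ℕ → ℝ := fun t => if t = 0 then 0 else C (a + t)

/-- First-arc-bounded with respect to a schedule `C` (no drop at the second vertex,
and all vertex gains lie between the gains of the first two vertices). -/
def FirstArcBoundedC (g C : ℕ → ℝ) (n : ℕ) : Prop :=
  C 1 = 0 ∧
    ((0 ≤ g 0 ∧ ∀ i ≤ n, 0 ≤ cGain g C i ∧ cGain g C i ≤ g 0) ∨
     (g 0 ≤ 0 ∧ ∀ i ≤ n, g 0 ≤ cGain g C i ∧ cGain g C i ≤ 0))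

/-- Last-arc-bounded with respect to a schedule `C` (no drops at the last two vertices,
and all vertex gains lie between the gains of the last two vertices). -/
def LastArcBoundedC (g C : ℕ → ℝ) (n : ℕ) : Prop :=
  C (n - 1) = 0 ∧ C n = 0 ∧
    ((0 ≤ g (n - 1) ∧ ∀ i ≤ n, cGain g C (n - 1) ≤ cGain g C i ∧ cGain g C i ≤ cGain g C n) ∨
     (g (n - 1) < 0 ∧ ∀ i ≤ n, cGain g C n ≤ cGain g C i ∧ cGain g C i ≤ cGain g C (n - 1)))

/-- First-arc-bounded (zero schedule). -/
def FirstArcBounded (g : ℕ → ℝ) (n : ℕ) : Prop := FirstArcBoundedC g (fun _ => 0) n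

/-- Last-arc-bounded (zero schedule). -/
def LastArcBounded (g : ℕ → ℝ) (n : ℕ) : Prop := LastArcBoundedC g (fun _ => 0) n

/-- Arc-bounded: first- or last-arc-bounded. -/
def ArcBounded (g : ℕ → ℝ) (n : ℕ) : Prop := FirstArcBounded g n ∨ LastArcBounded g n

/-- A funnel: arc-bounded and containing no monotone subpath of 2 or 3 consecutive arcs. -/
def Funnel (B : ℝ) (g : ℕ → ℝ) (n : ℕ) : Prop :=
  ArcBounded g n ∧ ∀ a m, (m = 2 ∨ m = 3) → a + m ≤ n → ¬ MonotonePath B (SubPath g a) m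

/-- `j = s̄(i)`: the maximal index `j ≥ i` (among arcs of a path with `n` arcs) such that
the subpath of arcs `i,…,j` is first-arc-bounded. -/
def IsSbar (g : ℕ → ℝ) (n i j : ℕ) : Prop :=
  i ≤ j ∧ j < n ∧ FirstArcBounded (SubPath g i) (j - i + 1) ∧
    ∀ j', i ≤ j' → j' < n → FirstArcBounded (SubPath g i) (j' - i + 1) → j' ≤ j

/-- `j = s̲(i)`: the minimal index `j ≤ i` such that the subpath of arcs `j,…,i`
is last-arc-bounded. -/
def IsSlow (g : ℕ → ℝ) (n i j : ℕ) : Prop :=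
  j ≤ i ∧ i < n ∧ LastArcBounded (SubPath g j) (i - j + 1) ∧
    ∀ j', j' ≤ i → LastArcBounded (SubPath g j') (i - j' + 1) → j ≤ j'

/-- Arc gains of the walk around a cycle with `m` arc gains `g`, starting at vertex `a`. -/
def cyc (g : ℕ → ℝ) (m a : ℕ) : ℕ → ℝ := fun t => g ((a + t) % m)

/-- A walk of length `ℓ` from `x` to `y` in the directed graph with arc relation `A`. -/
def IsWalk {V : Type*} (A : V → V → Prop) (w : ℕ → V) (ℓ : ℕ) (x y : V) : Prop :=
  w 0 = x ∧ w ℓ = y ∧ ∀ t < ℓ, A (w t) (w (t + 1))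

/-- The sequence of arc gains induced by a walk `w` in a graph with gain function `g`. -/
def walkGains {V : Type*} (g : V → V → ℝ) (w : ℕ → V) : ℕ → ℝ :=
  fun t => g (w t) (w (t + 1))


/-! ### Auxiliary lemmas -/

lemma charge_le {B b : ℝ} (hb : b ≤ B) (g : ℕ → ℝ) (i : ℕ) : charge B b g i ≤ B := by
  cases i with
  | zero => exact hb
  | succ n => exact min_le_right _ _

lemma vGain_succ (g : ℕ → ℝ) (i : ℕ) : vGain g (i + 1) = vGain g i + g i :=
  Finset.sum_range_succ g i

lemma charge_congr {B b : ℝ} {g g' : ℕ → ℝ} :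
    ∀ {i : ℕ}, (∀ t < i, g t = g' t) → charge B b g i = charge B b g' i
  | 0, _ => rfl
  | i + 1, h => by
    simp only [charge]
    rw [charge_congr (fun t ht => h t (ht.trans (Nat.lt_succ_self i))),
      h i (Nat.lt_succ_self i)]

lemma feasible_congr {B b : ℝ} {g g' : ℕ → ℝ} {n : ℕ} (h : ∀ t < n, g t = g' t) :
    Feasible B b g n ↔ Feasible B b g' n := by
  unfold Feasible
  constructor <;> intro hf i hi
  · rw [← charge_congr (fun t ht => h t (ht.trans hi)), ← h i hi]; exact hf i hi
  · rw [charge_congr (fun t ht => h t (ht.trans hi)), h i hi]; exact hf i hi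

lemma charge_add (B b : ℝ) (g : ℕ → ℝ) (m : ℕ) :
    ∀ k, charge B b g (m + k) = charge B (charge B b g m) (fun t => g (m + t)) k
  | 0 => rfl
  | k + 1 => by
    show charge B b g (m + k + 1) = _
    simp only [charge, charge_add B b g m k]

lemma feasible_add {B b : ℝ} {g : ℕ → ℝ} {m k : ℕ} :
    Feasible B b g (m + k) ↔
      Feasible B b g m ∧ Feasible B (charge B b g m) (fun t => g (m + t)) k := by
  constructor
  · intro h
    refine ⟨fun i hi => h i (hi.trans_le (Nat.le_add_right m k)), fun i hi => ?_⟩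
    have := h (m + i) (by omega)
    rwa [charge_add] at this
  · rintro ⟨h1, h2⟩ i hi
    rcases lt_or_ge i m with him | him
    · exact h1 i him
    · obtain ⟨j, rfl⟩ := Nat.exists_eq_add_of_le him
      rw [charge_add]
      exact h2 j (by omega)

lemma charge_ge_min {B b : ℝ} (hbB : b ≤ B) (g : ℕ → ℝ) :
    ∀ i, min (b + vGain g i) (charge B B g i) ≤ charge B b g i := by
  intro i
  induction i with
  | zero => simp [vGain, charge, hbB]
  | succ i ih =>
    have h1 : charge B B g (i + 1) ≤ charge B B g i + g i := min_le_left _ _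
    have h2 : charge B B g (i + 1) ≤ B := min_le_right _ _
    have hv : vGain g (i + 1) = vGain g i + g i := vGain_succ g i
    have hc : min (b + vGain g (i + 1)) (charge B B g (i + 1)) ≤ b + vGain g (i + 1) :=
      min_le_left _ _
    have hd : min (b + vGain g (i + 1)) (charge B B g (i + 1)) ≤ charge B B g (i + 1) :=
      min_le_right _ _
    show min (b + vGain g (i + 1)) (charge B B g (i + 1)) ≤ min (charge B b g i + g i) B
    refine le_min ?_ (hd.trans h2)
    rcases le_total (b + vGain g i) (charge B B g i) with h | h
    · rw [min_eq_left h] at ih; linarith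
    · rw [min_eq_right h] at ih; linarith [hd.trans h1]

lemma chargeB_exists (B : ℝ) (g : ℕ → ℝ) :
    ∀ i, ∃ j ≤ i, B + vGain g i - vGain g j ≤ charge B B g i := by
  intro i
  induction i with
  | zero => exact ⟨0, le_rfl, by simp [vGain, charge]⟩
  | succ i ih =>
    obtain ⟨j, hj, hle⟩ := ih
    have hv : vGain g (i + 1) = vGain g i + g i := vGain_succ g i
    have hch : charge B B g (i + 1) = min (charge B B g i + g i) B := rfl
    rcases le_total (charge B B g i + g i) B with h | h
    · refine ⟨j, hj.trans (Nat.le_succ i), ?_⟩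
      rw [hch, min_eq_left h]; linarith
    · refine ⟨i + 1, le_rfl, ?_⟩
      rw [hch, min_eq_right h]; linarith

/-- Key lemma: a path monotone w.r.t. a schedule `C` can be traversed from any
initial charge `b ∈ [0, B]` with `b + g^C ≥ 0`, ending with charge at least
`min (b + g^C) B`. -/
lemma mono_key {B : ℝ} {g C : ℕ → ℝ} {n : ℕ}
    (hC : Schedule C n) (hmono : MonotoneC B g C n) {b : ℝ}
    (hb0 : 0 ≤ b) (hbB : b ≤ B) (hbc : 0 ≤ b + cGain g C n) :
    Feasible B b g n ∧ min (b + cGain g C n) B ≤ charge B b g n := by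
  have hTrav : Feasible B B g n := by rcases hmono with h | h <;> exact h.1
  have hD0 : ∀ i ≤ n, 0 ≤ ∑ t ∈ Finset.range (i + 1), C t := by
    intro i hi
    refine Finset.sum_nonneg fun t ht => ?_
    rw [Finset.mem_range] at ht
    exact hC.2 t (by omega)
  have hDmono : ∀ j ≤ n, ∑ t ∈ Finset.range (j + 1), C t ≤ ∑ t ∈ Finset.range (n + 1), C t := by
    intro j hj
    refine Finset.sum_le_sum_of_subset_of_nonneg (Finset.range_subset_range.2 (by omega)) ?_
    intro t ht _
    rw [Finset.mem_range] at ht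
    exact hC.2 t (by omega)
  have hcv : ∀ i, cGain g C i = vGain g i - ∑ t ∈ Finset.range (i + 1), C t := fun i => rfl
  have hv_lb : ∀ i ≤ n, 0 ≤ b + vGain g i := by
    intro i hi
    have hd := hD0 i hi
    have hvc : cGain g C i ≤ vGain g i := by rw [hcv i]; linarith
    rcases hmono with h | h
    · have := (h.2 i hi).1; linarith
    · have h1 := (h.2 i hi).1; linarith
  constructor
  · intro i hi
    have h1 := charge_ge_min hbB g i
    have h2 := hTrav i hi
    have h3 := hv_lb (i + 1) (by omega)
    have hv : vGain g (i + 1) = vGain g i + g i := vGain_succ g i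
    rcases le_total (b + vGain g i) (charge B B g i) with h | h
    · rw [min_eq_left h] at h1; linarith
    · rw [min_eq_right h] at h1; linarith
  · obtain ⟨j, hj, hle⟩ := chargeB_exists B g n
    have h1 := charge_ge_min hbB g n
    have hgap : cGain g C n - cGain g C j ≤ vGain g n - vGain g j := by
      rw [hcv n, hcv j]
      have := hDmono j hj
      linarith
    have hbn : b + cGain g C n ≤ b + vGain g n := by
      rw [hcv n]
      have := hD0 n le_rfl
      linarith
    have ha : min (b + cGain g C n) B ≤ b + cGain g C n := min_le_left _ _
    have hb' : min (b + cGain g C n) B ≤ B := min_le_right _ _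
    rcases hmono with h | h
    · have hjn := (h.2 j hj).2
      rcases le_total (b + vGain g n) (charge B B g n) with hm | hm
      · rw [min_eq_left hm] at h1; linarith
      · rw [min_eq_right hm] at h1; linarith
    · have hj0 := (h.2 j hj).2
      rcases le_total (b + vGain g n) (charge B B g n) with hm | hm
      · rw [min_eq_left hm] at h1; linarith
      · rw [min_eq_right hm] at h1; linarith

/-- Concatenation of walks. -/
def wcat {V : Type*} (w1 : ℕ → V) (m : ℕ) (w2 : ℕ → V) : ℕ → V :=
  fun t => if t < m then w1 t else w2 (t - m)

lemma isWalk_wcat {V : Type*} {A : V → V → Prop} {w1 : ℕ → V} {m : ℕ} {w2 : ℕ → V} {k : ℕ}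
    {x y z : V} (h1 : IsWalk A w1 m x y) (h2 : IsWalk A w2 k y z) :
    IsWalk A (wcat w1 m w2) (m + k) x z := by
  obtain ⟨h10, h1m, h1a⟩ := h1
  obtain ⟨h20, h2k, h2a⟩ := h2
  have hend : w2 0 = w1 m := by rw [h20, h1m]
  refine ⟨?_, ?_, ?_⟩
  · unfold wcat
    rcases Nat.eq_zero_or_pos m with hm | hm
    · subst hm
      simp only [Nat.lt_irrefl, if_false, Nat.sub_zero]
      rw [hend, ← h10]
    · rw [if_pos hm, h10]
  · unfold wcat
    rw [if_neg (by omega)]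
    have : m + k - m = k := by omega
    rw [this, h2k]
  · intro t ht
    unfold wcat
    rcases lt_or_ge t m with htm | htm
    · rw [if_pos htm]
      rcases lt_or_ge (t + 1) m with ht1 | ht1
      · rw [if_pos ht1]
        exact h1a t htm
      · have hm : t + 1 = m := by omega
        rw [if_neg (by omega)]
        have h0 : t + 1 - m = 0 := by omega
        rw [h0, hend, ← hm]
        exact h1a t htm
    · rw [if_neg (by omega), if_neg (by omega)]
      have h0 : t + 1 - m = (t - m) + 1 := by omega
      rw [h0]
      exact h2a (t - m) (by omega)

lemma wcat_gains {V : Type*} (gf : V → V → ℝ) {w1 : ℕ → V} {m : ℕ} {w2 : ℕ → V}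
    (h : w2 0 = w1 m) (t : ℕ) :
    walkGains gf (wcat w1 m w2) t =
      if t < m then walkGains gf w1 t else walkGains gf w2 (t - m) := by
  unfold walkGains wcat
  rcases lt_or_ge t m with ht | ht
  · rw [if_pos ht, if_pos ht]
    rcases lt_or_ge (t + 1) m with ht1 | ht1
    · rw [if_pos ht1]
    · have hm : t + 1 = m := by omega
      rw [if_neg (by omega)]
      have h0 : t + 1 - m = 0 := by omega
      rw [h0, h, ← hm]
  · rw [if_neg (by omega), if_neg (by omega), if_neg (by omega)]
    have h0 : t + 1 - m = (t - m) + 1 := by omega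
    rw [h0]

lemma charge_glue {B b : ℝ} {G g1 g2 : ℕ → ℝ} {m : ℕ}
    (h : ∀ t, G t = if t < m then g1 t else g2 (t - m)) (k : ℕ) :
    charge B b G (m + k) = charge B (charge B b g1 m) g2 k ∧
      (Feasible B b G (m + k) ↔
        Feasible B b g1 m ∧ Feasible B (charge B b g1 m) g2 k) := by
  have hlt : ∀ t < m, G t = g1 t := fun t ht => by rw [h t, if_pos ht]
  have e1 : charge B b G m = charge B b g1 m := charge_congr hlt
  have e2' : (fun t => G (m + t)) = g2 := by
    funext j
    rw [h (m + j), if_neg (by omega)]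
    congr 1
    omega
  constructor
  · rw [charge_add, e2', e1]
  · rw [feasible_add, e2', e1, feasible_congr hlt]

/-- In a finite directed graph, if there is a walk `P` from `x` to `y` whose
induced path is ascending with `g(P) > 0`, and a walk `Q` from `y` to `x` whose induced
path is monotone with respect to a schedule `C` with `g(P) + g^C(Q) > 0`, then there is a
walk `W` from `x` to `y` with `α_0(W) = B`. -/
theorem reach_full_charge {V : Type*} [Fintype V] (A : V → V → Prop) (g : V → V → ℝ)
    (B : ℝ) (hB : 0 < B) (x y : V)
    (wP : ℕ → V) (ℓP : ℕ) (hWP : IsWalk A wP ℓP x y)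
    (hPasc : Ascending B (walkGains g wP) ℓP)
    (hgP : 0 < vGain (walkGains g wP) ℓP)
    (wQ : ℕ → V) (ℓQ : ℕ) (hWQ : IsWalk A wQ ℓQ y x)
    (C : ℕ → ℝ) (hC : Schedule C ℓQ)
    (hQmono : MonotoneC B (walkGains g wQ) C ℓQ)
    (hsum : 0 < vGain (walkGains g wP) ℓP + cGain (walkGains g wQ) C ℓQ) :
    ∃ w ℓ, IsWalk A w ℓ x y ∧ alpha B 0 (walkGains g w) ℓ = ((B : ℝ) : EReal) := by
  have hSchedP : Schedule (fun _ => (0 : ℝ)) ℓP := ⟨rfl, fun _ _ => le_rfl⟩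
  have hcgP : cGain (walkGains g wP) (fun _ => (0 : ℝ)) ℓP = vGain (walkGains g wP) ℓP := by
    simp [cGain]
  have hPmono : MonotoneC B (walkGains g wP) (fun _ => (0 : ℝ)) ℓP := Or.inl hPasc
  have stepP : ∀ b : ℝ, 0 ≤ b → b ≤ B →
      Feasible B b (walkGains g wP) ℓP ∧
        min (b + vGain (walkGains g wP) ℓP) B ≤ charge B b (walkGains g wP) ℓP := by
    intro b hb0 hbB
    have := mono_key hSchedP hPmono hb0 hbB (by rw [hcgP]; linarith)
    rwa [hcgP] at this
  by_cases hPB : B ≤ vGain (walkGains g wP) ℓP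
  · obtain ⟨hfeas, hge⟩ := stepP 0 le_rfl hB.le
    refine ⟨wP, ℓP, hWP, ?_⟩
    have hle := charge_le hB.le (walkGains g wP) ℓP
    rw [min_eq_right (by linarith)] at hge
    have heq : charge B 0 (walkGains g wP) ℓP = B := le_antisymm hle (by linarith)
    rw [alpha, if_pos hfeas, heq]
  · push_neg at hPB
    have key : ∀ j : ℕ, ∃ w ℓ, IsWalk A w ℓ x y ∧ Feasible B 0 (walkGains g w) ℓ ∧
        min (vGain (walkGains g wP) ℓP +
          (j : ℝ) * (vGain (walkGains g wP) ℓP + cGain (walkGains g wQ) C ℓQ)) B ≤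
          charge B 0 (walkGains g w) ℓ := by
      intro j
      induction j with
      | zero =>
        obtain ⟨hfeas, hge⟩ := stepP 0 le_rfl hB.le
        exact ⟨wP, ℓP, hWP, hfeas, by simpa using hge⟩
      | succ j ih =>
        obtain ⟨w, ℓ, hw, hfeas, hge⟩ := ih
        have hjc : (0 : ℝ) ≤ (j : ℝ) := Nat.cast_nonneg j
        have hje : (0 : ℝ) ≤ (j : ℝ) *
            (vGain (walkGains g wP) ℓP + cGain (walkGains g wQ) C ℓQ) :=
          mul_nonneg hjc hsum.le
        have hcB : charge B 0 (walkGains g w) ℓ ≤ B := charge_le hB.le _ _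
        have hcgP' : vGain (walkGains g wP) ℓP ≤ charge B 0 (walkGains g w) ℓ :=
          le_trans (le_min (by linarith) hPB.le) hge
        have hc0 : 0 ≤ charge B 0 (walkGains g w) ℓ := le_trans hgP.le hcgP'
        obtain ⟨hfQ, hgeQ⟩ := mono_key hC hQmono hc0 hcB (by linarith)
        have hc'B : charge B (charge B 0 (walkGains g w) ℓ) (walkGains g wQ) ℓQ ≤ B :=
          charge_le hcB _ _
        have hc'0 : 0 ≤ charge B (charge B 0 (walkGains g w) ℓ) (walkGains g wQ) ℓQ :=
          le_trans (le_min (by linarith) hB.le) hgeQ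
        obtain ⟨hfP, hgeP⟩ := stepP _ hc'0 hc'B
        have hend2 : wP 0 = wQ ℓQ := by rw [hWP.1, hWQ.2.1]
        have hend1 : (wcat wQ ℓQ wP) 0 = w ℓ := by
          rw [(isWalk_wcat hWQ hWP).1, hw.2.1]
        obtain ⟨eq1, iff1⟩ := charge_glue (B := B) (b := 0)
          (wcat_gains g hend1) (ℓQ + ℓP)
        obtain ⟨eq2, iff2⟩ := charge_glue (B := B)
          (b := charge B 0 (walkGains g w) ℓ) (wcat_gains g hend2) ℓP
        refine ⟨wcat w ℓ (wcat wQ ℓQ wP), ℓ + (ℓQ + ℓP),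
          isWalk_wcat hw (isWalk_wcat hWQ hWP), ?_, ?_⟩
        · rw [iff1]
          exact ⟨hfeas, by rw [iff2]; exact ⟨hfQ, hfP⟩⟩
        · rw [eq1, eq2]
          push_cast
          have hring : ((j : ℝ) + 1) *
              (vGain (walkGains g wP) ℓP + cGain (walkGains g wQ) C ℓQ) =
              (j : ℝ) * (vGain (walkGains g wP) ℓP + cGain (walkGains g wQ) C ℓQ) +
              (vGain (walkGains g wP) ℓP + cGain (walkGains g wQ) C ℓQ) := by ring
          refine le_trans (le_min ?_ (min_le_right _ _)) hgeP
          have m1 : min (vGain (walkGains g wP) ℓP + ((j : ℝ) + 1) *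
              (vGain (walkGains g wP) ℓP + cGain (walkGains g wQ) C ℓQ)) B ≤
              vGain (walkGains g wP) ℓP + ((j : ℝ) + 1) *
              (vGain (walkGains g wP) ℓP + cGain (walkGains g wQ) C ℓQ) := min_le_left _ _
          have m2 : min (vGain (walkGains g wP) ℓP + ((j : ℝ) + 1) *
              (vGain (walkGains g wP) ℓP + cGain (walkGains g wQ) C ℓQ)) B ≤ B :=
            min_le_right _ _
          rcases le_total (charge B 0 (walkGains g w) ℓ + cGain (walkGains g wQ) C ℓQ) B
            with h2 | h2
          · rw [min_eq_left h2] at hgeQ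
            rcases le_total (vGain (walkGains g wP) ℓP +
                (j : ℝ) * (vGain (walkGains g wP) ℓP + cGain (walkGains g wQ) C ℓQ)) B
              with h3 | h3
            · rw [min_eq_left h3] at hge
              linarith
            · rw [min_eq_right h3] at hge
              linarith
          · rw [min_eq_right h2] at hgeQ
            linarith
    obtain ⟨j, hj⟩ := exists_nat_ge ((B - vGain (walkGains g wP) ℓP) /
      (vGain (walkGains g wP) ℓP + cGain (walkGains g wQ) C ℓQ))
    obtain ⟨w, ℓ, hw, hfeas, hge⟩ := key j
    have hjε : B ≤ vGain (walkGains g wP) ℓP +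
        (j : ℝ) * (vGain (walkGains g wP) ℓP + cGain (walkGains g wQ) C ℓQ) := by
      rw [div_le_iff₀ hsum] at hj
      linarith
    refine ⟨w, ℓ, hw, ?_⟩
    have h1 : charge B 0 (walkGains g w) ℓ ≤ B := charge_le hB.le _ _
    rw [min_eq_right hjε] at hge
    have heq : charge B 0 (walkGains g w) ℓ = B := le_antisymm h1 hge
    rw [alpha, if_pos hfeas, heq]

end

end EV
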